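/- Suppose η := min_{‖x‖=1} ( ‖Φx‖²_Dir + (μᵀΦx)² ) > 0, where the minimum is over unit vectors x ∈ ℝᵈ. Then the matrix Φᵀ D (I − Π P) Φ is invertible, and consequently the linear system Φᵀ D (I − Π P) Φ θ = Φᵀ D Π R has a unique solution. -/

import Mathlib

open Matrix BigOperators Finset

/-- If `η := min_{‖x‖=1}( ‖Φx‖²_Dir + (μᵀΦx)² ) > 0`, then the
matrix `ΦᵀD(I − ΠP)Φ` (with `Π = I − eμᵀ`) is invertible, and consequently the
linear system `ΦᵀD(I − ΠP)Φ θ = ΦᵀD Π R` has a unique solution. -/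
theorem projected_bellman_unique_solution
    {n d : ℕ} (P : Matrix (Fin n) (Fin n) ℝ) (μ : Fin n → ℝ)
    (hPnonneg : ∀ i j, 0 ≤ P i j)
    (hstoch : ∀ i, ∑ j, P i j = 1)
    (hμpos : ∀ i, 0 < μ i) (hμsum : ∑ i, μ i = 1)
    (hstat : ∀ j, ∑ i, μ i * P i j = μ j)
    (Φ : Matrix (Fin n) (Fin d) ℝ) (R : Fin n → ℝ)
    (η : ℝ) (hηpos : 0 < η)
    (hη : IsLeast {r : ℝ | ∃ x : Fin d → ℝ, (∑ i, (x i) ^ 2 = 1) ∧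
        r = (1 / 2) * (∑ s, ∑ s', μ s * P s s' *
              (Φ.mulVec x s - Φ.mulVec x s') ^ 2)
            + (∑ s, μ s * Φ.mulVec x s) ^ 2} η) :
    IsUnit (Φᵀ * Matrix.diagonal μ *
        ((1 - (1 - Matrix.vecMulVec (fun _ => (1 : ℝ)) μ) * P : Matrix (Fin n) (Fin n) ℝ)) * Φ) ∧
    ∃! θ : Fin d → ℝ,
      (Φᵀ * Matrix.diagonal μ *
        ((1 - (1 - Matrix.vecMulVec (fun _ => (1 : ℝ)) μ) * P : Matrix (Fin n) (Fin n) ℝ)) * Φ).mulVec θ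
      = (Φᵀ * Matrix.diagonal μ *
          (1 - Matrix.vecMulVec (fun _ => (1 : ℝ)) μ)).mulVec R := by
  set A := Φᵀ * Matrix.diagonal μ *
      ((1 - (1 - Matrix.vecMulVec (fun _ => (1 : ℝ)) μ) * P : Matrix (Fin n) (Fin n) ℝ)) * Φ with hAdef
  -- Key identity: the quadratic form of A equals Dirichlet energy plus squared mean.
  have key : ∀ x : Fin d → ℝ, x ⬝ᵥ A *ᵥ x =
      (1 / 2) * (∑ s, ∑ s', μ s * P s s' *
          (Φ.mulVec x s - Φ.mulVec x s') ^ 2)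
        + (∑ s, μ s * Φ.mulVec x s) ^ 2 := by
    intro x
    set f := Φ.mulVec x with hf
    set c : ℝ := ∑ s, μ s * f s with hc
    -- step 1: reduce LHS to f ⬝ᵥ D *ᵥ (N *ᵥ f)
    have h1 : x ⬝ᵥ A *ᵥ x = f ⬝ᵥ (Matrix.diagonal μ) *ᵥ
        ((1 - (1 - Matrix.vecMulVec (fun _ => (1 : ℝ)) μ) * P) *ᵥ f) := by
      rw [hAdef, Matrix.mul_assoc, Matrix.mul_assoc, ← Matrix.mulVec_mulVec,
        Matrix.dotProduct_mulVec, Matrix.vecMul_transpose, ← hf,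
        ← Matrix.mulVec_mulVec, ← Matrix.mulVec_mulVec, ← hf]
    -- step 2: compute N *ᵥ f pointwise
    have hstatP : μ ᵥ* P = μ := by
      funext j
      simp [Matrix.vecMul, dotProduct, hstat j]
    have h2 : ∀ s, ((1 - (1 - Matrix.vecMulVec (fun _ => (1 : ℝ)) μ) * P) *ᵥ f) s
        = f s - (P *ᵥ f) s + c := by
      intro s
      have hv : (Matrix.vecMulVec (fun _ => (1 : ℝ)) μ *ᵥ (P *ᵥ f)) s
          = μ ⬝ᵥ (P *ᵥ f) := by
        simp [Matrix.mulVec, dotProduct, Matrix.vecMulVec_apply]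
      have hμPf : μ ⬝ᵥ (P *ᵥ f) = c := by
        rw [Matrix.dotProduct_mulVec, hstatP, hc]
        simp [dotProduct]
      rw [Matrix.sub_mulVec, Matrix.one_mulVec, ← Matrix.mulVec_mulVec,
        Matrix.sub_mulVec, Matrix.one_mulVec]
      simp only [Pi.sub_apply]
      rw [hv, hμPf]
      ring
    -- step 3: LHS as explicit sums
    have h3 : x ⬝ᵥ A *ᵥ x = (∑ s, μ s * f s ^ 2)
        - (∑ s, ∑ s', μ s * P s s' * (f s * f s')) + c ^ 2 := by
      rw [h1]
      have : ∀ s, f s * ((Matrix.diagonal μ *ᵥ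
          ((1 - (1 - Matrix.vecMulVec (fun _ => (1 : ℝ)) μ) * P) *ᵥ f)) s)
          = μ s * f s ^ 2 - (∑ s', μ s * P s s' * (f s * f s')) + c * (μ s * f s) := by
        intro s
        rw [Matrix.mulVec_diagonal, h2 s]
        have hPf : (P *ᵥ f) s = ∑ s', P s s' * f s' := by
          simp [Matrix.mulVec, dotProduct]
        rw [hPf]
        have : μ s * f s * (∑ s', P s s' * f s')
            = ∑ s', μ s * P s s' * (f s * f s') := by
          rw [Finset.mul_sum]
          exact Finset.sum_congr rfl fun s' _ => by ring
        rw [← this]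
        ring
      rw [dotProduct]
      rw [Finset.sum_congr rfl fun s _ => this s]
      rw [Finset.sum_add_distrib, Finset.sum_sub_distrib, ← Finset.mul_sum, ← hc]
      ring
    -- step 4: RHS as the same sums
    have hA1 : ∑ s, ∑ s', μ s * P s s' * f s ^ 2 = ∑ s, μ s * f s ^ 2 := by
      refine Finset.sum_congr rfl fun s _ => ?_
      calc ∑ s', μ s * P s s' * f s ^ 2 = ∑ s', (μ s * f s ^ 2) * P s s' :=
            Finset.sum_congr rfl fun s' _ => by ring
        _ = (μ s * f s ^ 2) * ∑ s', P s s' := by rw [← Finset.mul_sum]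
        _ = μ s * f s ^ 2 := by rw [hstoch s, mul_one]
    have hA2 : ∑ s, ∑ s', μ s * P s s' * f s' ^ 2 = ∑ s, μ s * f s ^ 2 := by
      rw [Finset.sum_comm]
      refine Finset.sum_congr rfl fun s' _ => ?_
      calc ∑ s, μ s * P s s' * f s' ^ 2 = (∑ s, μ s * P s s') * f s' ^ 2 := by
            rw [Finset.sum_mul]
        _ = μ s' * f s' ^ 2 := by rw [hstat s']
    have hsq : ∑ s, ∑ s', μ s * P s s' * (f s - f s') ^ 2
        = (∑ s, μ s * f s ^ 2) + (∑ s, μ s * f s ^ 2)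
          - 2 * (∑ s, ∑ s', μ s * P s s' * (f s * f s')) := by
      have expand : ∀ s, ∑ s', μ s * P s s' * (f s - f s') ^ 2
          = (∑ s', μ s * P s s' * f s ^ 2) + (∑ s', μ s * P s s' * f s' ^ 2)
            - 2 * (∑ s', μ s * P s s' * (f s * f s')) := by
        intro s
        rw [Finset.mul_sum, ← Finset.sum_add_distrib, ← Finset.sum_sub_distrib]
        exact Finset.sum_congr rfl fun s' _ => by ring
      rw [Finset.sum_congr rfl fun s _ => expand s, Finset.sum_sub_distrib,
        Finset.sum_add_distrib, hA1, hA2, ← Finset.mul_sum]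
    rw [h3, hsq]
    ring
  -- Positivity of the quadratic form on nonzero vectors
  have qpos : ∀ v : Fin d → ℝ, v ≠ 0 → 0 < v ⬝ᵥ A *ᵥ v := by
    intro v hv
    have hsum : 0 < ∑ i, v i ^ 2 := by
      obtain ⟨i, hi⟩ : ∃ i, v i ≠ 0 := by
        by_contra h
        push_neg at h
        exact hv (funext h)
      refine Finset.sum_pos' (fun j _ => sq_nonneg _) ⟨i, Finset.mem_univ i, ?_⟩
      positivity
    set s : ℝ := Real.sqrt (∑ i, v i ^ 2) with hs
    have hspos : 0 < s := Real.sqrt_pos.mpr hsum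
    have hs2 : s ^ 2 = ∑ i, v i ^ 2 := Real.sq_sqrt hsum.le
    set y : Fin d → ℝ := fun i => v i / s with hy
    have hvy : v = s • y := by
      funext i
      simp [hy, Pi.smul_apply, smul_eq_mul]
      field_simp
    have hynorm : ∑ i, y i ^ 2 = 1 := by
      simp only [hy, div_pow]
      rw [← Finset.sum_div, ← hs2]
      field_simp
    have hmem : y ⬝ᵥ A *ᵥ y ∈ {r : ℝ | ∃ x : Fin d → ℝ, (∑ i, (x i) ^ 2 = 1) ∧
        r = (1 / 2) * (∑ s, ∑ s', μ s * P s s' *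
              (Φ.mulVec x s - Φ.mulVec x s') ^ 2)
            + (∑ s, μ s * Φ.mulVec x s) ^ 2} := ⟨y, hynorm, key y⟩
    have hyq : η ≤ y ⬝ᵥ A *ᵥ y := hη.2 hmem
    have hscale : v ⬝ᵥ A *ᵥ v = s ^ 2 * (y ⬝ᵥ A *ᵥ y) := by
      rw [hvy, Matrix.mulVec_smul, smul_dotProduct, dotProduct_smul]
      simp [smul_eq_mul]
      ring
    rw [hscale]
    have : 0 < y ⬝ᵥ A *ᵥ y := lt_of_lt_of_le hηpos hyq
    positivity
  -- A has nonzero determinant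
  have hdet : A.det ≠ 0 := by
    intro h
    obtain ⟨v, hv0, hv⟩ := Matrix.exists_mulVec_eq_zero_iff.mpr h
    have := qpos v hv0
    rw [hv] at this
    simp at this
  have hunit : IsUnit A := (Matrix.isUnit_iff_isUnit_det A).mpr (isUnit_iff_ne_zero.mpr hdet)
  have hdetU : IsUnit A.det := isUnit_iff_ne_zero.mpr hdet
  refine ⟨hunit, ?_⟩
  set b := (Φᵀ * Matrix.diagonal μ *
      (1 - Matrix.vecMulVec (fun _ => (1 : ℝ)) μ)).mulVec R with hb
  refine ⟨A⁻¹ *ᵥ b, ?_, ?_⟩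
  · show A *ᵥ (A⁻¹ *ᵥ b) = b
    rw [Matrix.mulVec_mulVec b A A⁻¹, Matrix.mul_nonsing_inv A hdetU,
      Matrix.one_mulVec]
  · intro θ hθ
    have h := congrArg (fun w => A⁻¹ *ᵥ w) hθ
    simp only [Matrix.mulVec_mulVec θ A⁻¹ A, Matrix.nonsing_inv_mul A hdetU,
      Matrix.one_mulVec] at h
    rw [h]
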